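/- Q-function collapse: Let Q_δt(s,a) = r(s,a)·δt + γ^δt · V_δt(s'), where s' = s + F(s,a) δt + o(δt), γ ∈ (0,1), r and F bounded, and V_δt is C¹ in s with derivatives uniformly bounded in s and δt, and V_δt uniformly bounded. Then Q_δt(s,a) = V_δt(s) + O(δt) as δt → 0; in particular, for any two actions a, a', Q_δt(s,a) − Q_δt(s,a') = O(δt). -/

import Mathlib

open Real Filter Asymptotics

/-- Collapse of the `Q`-function in near-continuous time: with one-step Bellman relation
`Q_δt(s,a) = r(s,a) δt + γ^δt V_δt(s')`, `s' = s + F(s,a) δt + o(δt)`, bounded reward and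
dynamics, and `V_δt` C¹ with value and derivative uniformly bounded in `s` and `δt`,
one has `Q_δt(s,a) = V_δt(s) + O(δt)`; in particular the gap between any two actions is
`O(δt)`. -/
theorem q_function_collapse
    {n : ℕ} {A : Type*} (γ : ℝ) (hγ0 : 0 < γ) (hγ1 : γ < 1)
    (r : EuclideanSpace ℝ (Fin n) → A → ℝ)
    (F : EuclideanSpace ℝ (Fin n) → A → EuclideanSpace ℝ (Fin n))
    (Mr MF : ℝ) (hr : ∀ s a, |r s a| ≤ Mr) (hF : ∀ s a, ‖F s a‖ ≤ MF)
    (V : ℝ → EuclideanSpace ℝ (Fin n) → ℝ)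
    (hVC1 : ∀ δt : ℝ, 0 < δt → ContDiff ℝ 1 (V δt))
    (MV MD : ℝ)
    (hVb : ∀ δt : ℝ, 0 < δt → ∀ x, |V δt x| ≤ MV)
    (hVd : ∀ δt : ℝ, 0 < δt → ∀ x, ‖fderiv ℝ (V δt) x‖ ≤ MD)
    (s' : ℝ → EuclideanSpace ℝ (Fin n) → A → EuclideanSpace ℝ (Fin n))
    (hs' : ∀ s a, (fun δt : ℝ => s' δt s a - s - δt • F s a)
      =o[nhdsWithin 0 (Set.Ioi 0)] (fun δt : ℝ => δt))
    (Q : ℝ → EuclideanSpace ℝ (Fin n) → A → ℝ)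
    (hQ : ∀ δt : ℝ, 0 < δt → ∀ s a,
      Q δt s a = r s a * δt + Real.exp (δt * Real.log γ) * V δt (s' δt s a)) :
    (∀ s a, (fun δt : ℝ => Q δt s a - V δt s)
      =O[nhdsWithin 0 (Set.Ioi 0)] (fun δt : ℝ => δt)) ∧
    (∀ s a a', (fun δt : ℝ => Q δt s a - Q δt s a')
      =O[nhdsWithin 0 (Set.Ioi 0)] (fun δt : ℝ => δt)) := by

  have key : ∀ s a, (fun δt : ℝ => Q δt s a - V δt s)
      =O[nhdsWithin 0 (Set.Ioi 0)] (fun δt : ℝ => δt) := by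
    intro s a
    have hMr : 0 ≤ Mr := le_trans (abs_nonneg _) (hr s a)
    have hMV : 0 ≤ MV := le_trans (abs_nonneg _) (hVb 1 one_pos s)
    have hMD : 0 ≤ MD := le_trans (norm_nonneg _) (hVd 1 one_pos s)
    have hMF : 0 ≤ MF := le_trans (norm_nonneg _) (hF s a)
    have hlog : Real.log γ < 0 := Real.log_neg hγ0 hγ1
    rw [isBigO_iff]
    refine ⟨Mr + MV * |Real.log γ| + MD * (MF + 1), ?_⟩
    filter_upwards [self_mem_nhdsWithin, (hs' s a).def one_pos] with δt hδt hlittle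
    have hδt0 : 0 < δt := hδt
    have habs : |δt| = δt := abs_of_pos hδt0
    rw [hQ δt hδt0 s a]
    set e := Real.exp (δt * Real.log γ) with he
    have hLip : |V δt (s' δt s a) - V δt s| ≤ MD * ‖s' δt s a - s‖ := by
      have := (convex_univ : Convex ℝ (Set.univ : Set (EuclideanSpace ℝ (Fin n)))).norm_image_sub_le_of_norm_fderiv_le
        (fun z _ => ((hVC1 δt hδt0).differentiable one_ne_zero).differentiableAt)
        (fun z _ => hVd δt hδt0 z) (Set.mem_univ s) (Set.mem_univ (s' δt s a))
      simpa [Real.norm_eq_abs] using this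
    have hsdist : ‖s' δt s a - s‖ ≤ (MF + 1) * δt := by
      have h1 : ‖s' δt s a - s - δt • F s a‖ ≤ 1 * ‖δt‖ := hlittle
      have h2 : ‖δt • F s a‖ ≤ δt * MF := by
        rw [norm_smul, Real.norm_eq_abs, habs]
        exact mul_le_mul_of_nonneg_left (hF s a) hδt0.le
      calc ‖s' δt s a - s‖ ≤ ‖s' δt s a - s - δt • F s a‖ + ‖δt • F s a‖ := by
            simpa using norm_add_le (s' δt s a - s - δt • F s a) (δt • F s a)
        _ ≤ 1 * ‖δt‖ + δt * MF := add_le_add h1 h2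
        _ = (MF + 1) * δt := by rw [Real.norm_eq_abs, habs]; ring
    have hexp : |e - 1| ≤ δt * |Real.log γ| := by
      have hx : δt * Real.log γ ≤ 0 :=
        mul_nonpos_of_nonneg_of_nonpos hδt0.le hlog.le
      have h1 : e ≤ 1 := Real.exp_le_one_iff.mpr hx
      have h2 : δt * Real.log γ + 1 ≤ e := Real.add_one_le_exp _
      rw [abs_of_nonpos (by linarith), abs_of_nonpos hlog.le]
      nlinarith
    have hVs' : |V δt (s' δt s a)| ≤ MV := hVb δt hδt0 _
    have hd : r s a * δt + e * V δt (s' δt s a) - V δt s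
        = r s a * δt + (e - 1) * V δt (s' δt s a) + (V δt (s' δt s a) - V δt s) := by
      ring
    rw [Real.norm_eq_abs, Real.norm_eq_abs, habs, hd]
    calc |r s a * δt + (e - 1) * V δt (s' δt s a) + (V δt (s' δt s a) - V δt s)|
        ≤ |r s a * δt| + |(e - 1) * V δt (s' δt s a)| + |V δt (s' δt s a) - V δt s| :=
          (abs_add_le _ _).trans (add_le_add_left (abs_add_le _ _) _)
      _ ≤ Mr * δt + (δt * |Real.log γ|) * MV + MD * ((MF + 1) * δt) := by
          refine add_le_add (add_le_add ?_ ?_) (hLip.trans ?_)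
          · rw [abs_mul, habs]
            exact mul_le_mul_of_nonneg_right (hr s a) hδt0.le
          · rw [abs_mul]
            exact mul_le_mul hexp hVs' (abs_nonneg _)
              (by positivity)
          · exact mul_le_mul_of_nonneg_left hsdist hMD
      _ = (Mr + MV * |Real.log γ| + MD * (MF + 1)) * δt := by ring
  refine ⟨key, fun s a a' => ?_⟩
  simpa using (key s a).sub (key s a')
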